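/- arXiv:0803.2373 — 2 statements merged into one kernel-verified Lean document; each statement's English description precedes it below -/
import Mathlib

section
/- There exist constants ε > 0 and c₁, c₂, C > 0 (depending only on r) such that: if the source condition x₀ − x† = F'(x†)*v holds for some v ∈ Y lying in the orthogonal complement of the kernel of F'(x†)*, and L‖v‖ ≤ ε, then the noise-free iterates satisfy c₁ β_k ≤ ‖x_k − x†‖ ≤ c₂ β_k for all k ≥ 0, where β_k := ‖α_k (α_k I + F'(x†)*F'(x†))^{-1}(x₀ − x†)‖; moreover ‖x_{k−1} − x†‖ ≤ C ‖x_k − x†‖ for all k ≥ 1, and ‖x_l − x†‖ ≤ C ‖x_k − x†‖ for all integers 0 ≤ k ≤ l. -/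
open ContinuousLinearMap RealInnerProductSpace Filter

/-- `(α I + T*T)⁻¹` as an operator on `X` (via `Ring.inverse`; for `α > 0` the operator
`α I + T*T` is a unit, so this is the genuine inverse). -/
noncomputable def regInvX {X Y : Type*} [NormedAddCommGroup X] [InnerProductSpace ℝ X]
    [CompleteSpace X] [NormedAddCommGroup Y] [InnerProductSpace ℝ Y] [CompleteSpace Y]
    (α : ℝ) (T : X →L[ℝ] Y) : X →L[ℝ] X :=
  Ring.inverse (α • (1 : X →L[ℝ] X) + (adjoint T).comp T)

/-- `(α I + T T*)⁻¹` as an operator on `Y`. -/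
noncomputable def regInvY {X Y : Type*} [NormedAddCommGroup X] [InnerProductSpace ℝ X]
    [CompleteSpace X] [NormedAddCommGroup Y] [InnerProductSpace ℝ Y] [CompleteSpace Y]
    (α : ℝ) (T : X →L[ℝ] Y) : Y →L[ℝ] Y :=
  Ring.inverse (α • (1 : Y →L[ℝ] Y) + T.comp (adjoint T))

section Aux
variable {X Y : Type*} [NormedAddCommGroup X] [InnerProductSpace ℝ X] [CompleteSpace X]
  [NormedAddCommGroup Y] [InnerProductSpace ℝ Y] [CompleteSpace Y]

/-- `α I + T*T`. -/
noncomputable def regS (α : ℝ) (T : X →L[ℝ] Y) : X →L[ℝ] X :=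
  α • (1 : X →L[ℝ] X) + (adjoint T).comp T

lemma regS_apply (α : ℝ) (T : X →L[ℝ] Y) (x : X) :
    regS α T x = α • x + adjoint T (T x) := by
  simp [regS]

lemma inner_regS (α : ℝ) (T : X →L[ℝ] Y) (x : X) :
    ⟪regS α T x, x⟫ = α * ‖x‖ ^ 2 + ‖T x‖ ^ 2 := by
  rw [regS_apply, inner_add_left, real_inner_smul_left, adjoint_inner_left,
    real_inner_self_eq_norm_sq, real_inner_self_eq_norm_sq]

lemma isUnit_regS {α : ℝ} (hα : 0 < α) (T : X →L[ℝ] Y) : IsUnit (regS α T) := by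
  refine isUnit_of_forall_le_norm_inner_map _ (c := ⟨α, hα.le⟩) ?_ fun x => ?_
  · exact_mod_cast hα
  · have h := inner_regS α T x
    have h2 : α * ‖x‖ ^ 2 ≤ ⟪regS α T x, x⟫ := by nlinarith [sq_nonneg ‖T x‖]
    have h3 : (0:ℝ) ≤ ⟪regS α T x, x⟫ := le_trans (by positivity) h2
    calc ‖x‖ ^ 2 * (⟨α, hα.le⟩ : NNReal) = α * ‖x‖ ^ 2 := by
          simp [mul_comm]
      _ ≤ ⟪regS α T x, x⟫ := h2
      _ ≤ ‖⟪regS α T x, x⟫‖ := le_abs_self _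

lemma regS_regInvX {α : ℝ} (hα : 0 < α) (T : X →L[ℝ] Y) (x : X) :
    regS α T (regInvX α T x) = x := by
  have h := Ring.mul_inverse_cancel _ (isUnit_regS hα T)
  have := congrFun (congrArg (fun f : X →L[ℝ] X => (f : X → X)) h) x
  simpa [regInvX, regS, ContinuousLinearMap.mul_apply] using this

lemma regInvX_regS {α : ℝ} (hα : 0 < α) (T : X →L[ℝ] Y) (x : X) :
    regInvX α T (regS α T x) = x := by
  have h := Ring.inverse_mul_cancel _ (isUnit_regS hα T)
  have := congrFun (congrArg (fun f : X →L[ℝ] X => (f : X → X)) h) x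
  simpa [regInvX, regS, ContinuousLinearMap.mul_apply] using this

/-- `‖α (αI + T*T)⁻¹‖ ≤ 1` pointwise. -/
lemma norm_regInvX_le {α : ℝ} (hα : 0 < α) (T : X →L[ℝ] Y) (x : X) :
    α * ‖regInvX α T x‖ ≤ ‖x‖ := by
  set u := regInvX α T x with hu
  have h1 : α * ‖u‖ ^ 2 + ‖T u‖ ^ 2 = ⟪regS α T u, u⟫ := (inner_regS α T u).symm
  have h2 : ⟪regS α T u, u⟫ ≤ ‖regS α T u‖ * ‖u‖ := real_inner_le_norm _ _
  rw [regS_regInvX hα] at h1 h2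
  rcases (norm_nonneg u).eq_or_lt.imp_left Eq.symm with h | h
  · rw [h, mul_zero]; exact norm_nonneg x
  · nlinarith [sq_nonneg ‖T u‖]

/-- `‖(αI + T*T)⁻¹ T*‖ ≤ 1/(2√α)` pointwise. -/
lemma norm_regInvX_adjoint_le {α : ℝ} (hα : 0 < α) (T : X →L[ℝ] Y) (y : Y) :
    2 * Real.sqrt α * ‖regInvX α T (adjoint T y)‖ ≤ ‖y‖ := by
  set u := regInvX α T (adjoint T y) with hu
  have h1 : α * ‖u‖ ^ 2 + ‖T u‖ ^ 2 = ⟪regS α T u, u⟫ := (inner_regS α T u).symm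
  have h2 : regS α T u = adjoint T y := regS_regInvX hα T _
  have h3 : ⟪regS α T u, u⟫ = ⟪y, T u⟫ := by rw [h2, adjoint_inner_left]
  have h4 : ⟪y, T u⟫ ≤ ‖y‖ * ‖T u‖ := real_inner_le_norm _ _
  have h5 : α * ‖u‖ ^ 2 + ‖T u‖ ^ 2 ≤ ‖y‖ * ‖T u‖ := by rw [h1, h3]; exact h4
  have hs : Real.sqrt α * Real.sqrt α = α := Real.mul_self_sqrt hα.le
  have hs0 : 0 < Real.sqrt α := Real.sqrt_pos.mpr hα
  nlinarith [sq_nonneg (‖y‖ - 2 * ‖T u‖), sq_nonneg (2 * Real.sqrt α * ‖u‖ - ‖y‖),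
    norm_nonneg u, norm_nonneg y, mul_pos hs0 hs0]

/-- `α`-multiplied form of the previous estimate. -/
lemma norm_smul_regInvX_adjoint_le {α : ℝ} (hα : 0 < α) (T : X →L[ℝ] Y) (y : Y) :
    2 * (α * ‖regInvX α T (adjoint T y)‖) ≤ Real.sqrt α * ‖y‖ := by
  have h := norm_regInvX_adjoint_le hα T y
  have hss : Real.sqrt α * Real.sqrt α = α := Real.mul_self_sqrt hα.le
  have h2 := mul_le_mul_of_nonneg_left h (Real.sqrt_nonneg α)
  have h3 : Real.sqrt α * (2 * Real.sqrt α * ‖regInvX α T (adjoint T y)‖)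
      = 2 * (α * ‖regInvX α T (adjoint T y)‖) := by
    rw [show Real.sqrt α * (2 * Real.sqrt α * ‖regInvX α T (adjoint T y)‖)
        = 2 * ((Real.sqrt α * Real.sqrt α) * ‖regInvX α T (adjoint T y)‖) from by ring, hss]
  linarith

/-- `‖T (αI + T*T)⁻¹ T*‖ ≤ 1` pointwise. -/
lemma norm_T_regInvX_adjoint_le {α : ℝ} (hα : 0 < α) (T : X →L[ℝ] Y) (y : Y) :
    ‖T (regInvX α T (adjoint T y))‖ ≤ ‖y‖ := by
  set u := regInvX α T (adjoint T y) with hu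
  have h1 : α * ‖u‖ ^ 2 + ‖T u‖ ^ 2 = ⟪regS α T u, u⟫ := (inner_regS α T u).symm
  have h2 : regS α T u = adjoint T y := regS_regInvX hα T _
  have h3 : ⟪regS α T u, u⟫ = ⟪y, T u⟫ := by rw [h2, adjoint_inner_left]
  have h4 : ⟪y, T u⟫ ≤ ‖y‖ * ‖T u‖ := real_inner_le_norm _ _
  have h5 : α * ‖u‖ ^ 2 + ‖T u‖ ^ 2 ≤ ‖y‖ * ‖T u‖ := by rw [h1, h3]; exact h4
  rcases (norm_nonneg (T u)).eq_or_lt.imp_left Eq.symm with h | h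
  · rw [h]; exact norm_nonneg y
  · nlinarith [mul_nonneg hα.le (sq_nonneg ‖u‖)]

/-- Resolvent identity: `R_{α'} w = R_α w + (α - α') R_{α'} R_α w`. -/
lemma regInv_resolvent {α α' : ℝ} (hα : 0 < α) (hα' : 0 < α') (T : X →L[ℝ] Y) (w : X) :
    regInvX α' T w = regInvX α T w + (α - α') • regInvX α' T (regInvX α T w) := by
  set u := regInvX α T w with hu
  have h1 : regS α' T u + (α - α') • u = regS α T u := by
    rw [regS_apply, regS_apply, sub_smul]; abel
  have h2 : regS α T u = w := regS_regInvX hα T w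
  calc regInvX α' T w = regInvX α' T (regS α' T u + (α - α') • u) := by rw [← h2, ← h1]
    _ = regInvX α' T (regS α' T u) + (α - α') • regInvX α' T u := by
        rw [map_add, map_smul]
    _ = u + (α - α') • regInvX α' T u := by rw [regInvX_regS hα']
    _ = regInvX α T w + (α - α') • regInvX α' T (regInvX α T w) := by rw [hu]

/-- `β(α') ≤ β(α)` for `α' ≤ α`. -/
lemma beta_mono {α α' : ℝ} (hα' : 0 < α') (hle : α' ≤ α) (T : X →L[ℝ] Y) (w : X) :
    α' * ‖regInvX α' T w‖ ≤ α * ‖regInvX α T w‖ := by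
  have hα : 0 < α := lt_of_lt_of_le hα' hle
  have hid := regInv_resolvent hα hα' T w
  have h1 : ‖regInvX α' T w‖ ≤ ‖regInvX α T w‖
      + (α - α') * ‖regInvX α' T (regInvX α T w)‖ := by
    rw [hid]
    refine (norm_add_le _ _).trans ?_
    rw [norm_smul, Real.norm_eq_abs, abs_of_nonneg (by linarith)]
  have h2 : α' * ‖regInvX α' T (regInvX α T w)‖ ≤ ‖regInvX α T w‖ :=
    norm_regInvX_le hα' T _
  nlinarith [norm_nonneg (regInvX α' T (regInvX α T w)), norm_nonneg (regInvX α T w)]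

/-- `β(α) ≤ 2 (α/α') β(α')` for `α' ≤ α`. -/
lemma beta_mono' {α α' : ℝ} (hα' : 0 < α') (hle : α' ≤ α) (T : X →L[ℝ] Y) (w : X) :
    α' * (α * ‖regInvX α T w‖) ≤ 2 * α * (α' * ‖regInvX α' T w‖) := by
  have hα : 0 < α := lt_of_lt_of_le hα' hle
  have hid := regInv_resolvent hα' hα T w
  have h1 : ‖regInvX α T w‖ ≤ ‖regInvX α' T w‖
      + (α - α') * ‖regInvX α T (regInvX α' T w)‖ := by
    rw [hid]
    refine (norm_add_le _ _).trans ?_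
    rw [norm_smul, Real.norm_eq_abs, abs_sub_comm,
      abs_of_nonneg (by linarith : (0:ℝ) ≤ α - α')]
  have h2 : α * ‖regInvX α T (regInvX α' T w)‖ ≤ ‖regInvX α' T w‖ :=
    norm_regInvX_le hα T _
  have h3 : α * ‖regInvX α T w‖ ≤ (2 * α - α') * ‖regInvX α' T w‖ := by
    nlinarith [mul_le_mul_of_nonneg_left h1 hα.le,
      mul_le_mul_of_nonneg_left h2 (sub_nonneg.mpr hle)]
  nlinarith [mul_le_mul_of_nonneg_left h3 hα'.le, norm_nonneg (regInvX α' T w),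
    mul_nonneg (mul_nonneg hα'.le hα'.le) (norm_nonneg (regInvX α' T w))]

/-- Anchor: if `‖T‖ ≤ √α` then `‖x‖ ≤ 2 α ‖R_α x‖`. -/
lemma anchor_le {α : ℝ} (hα : 0 < α) (T : X →L[ℝ] Y) (hT : ‖T‖ ≤ Real.sqrt α) (x : X) :
    ‖x‖ ≤ 2 * (α * ‖regInvX α T x‖) := by
  have hS : ‖regS α T‖ ≤ 2 * α := by
    refine (norm_add_le _ _).trans ?_
    have h1 : ‖α • (1 : X →L[ℝ] X)‖ ≤ α := by
      refine (norm_smul_le α (1 : X →L[ℝ] X)).trans ?_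
      rw [Real.norm_eq_abs, abs_of_pos hα]
      have hone : ‖(1 : X →L[ℝ] X)‖ ≤ 1 := by
        rw [ContinuousLinearMap.one_def]; exact ContinuousLinearMap.norm_id_le
      calc α * ‖(1 : X →L[ℝ] X)‖ ≤ α * 1 :=
            mul_le_mul_of_nonneg_left hone hα.le
        _ = α := mul_one α
    have h2 : ‖(adjoint T).comp T‖ ≤ α := by
      rw [norm_adjoint_comp_self]
      calc ‖T‖ * ‖T‖ ≤ Real.sqrt α * Real.sqrt α :=
            mul_le_mul hT hT (norm_nonneg _) (Real.sqrt_nonneg _)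
        _ = α := Real.mul_self_sqrt hα.le
    linarith
  calc ‖x‖ = ‖regS α T (regInvX α T x)‖ := by rw [regS_regInvX hα]
    _ ≤ ‖regS α T‖ * ‖regInvX α T x‖ := le_opNorm _ _
    _ ≤ 2 * α * ‖regInvX α T x‖ :=
        mul_le_mul_of_nonneg_right hS (norm_nonneg _)
    _ = 2 * (α * ‖regInvX α T x‖) := by ring

lemma norm_adjoint_sub (T S : X →L[ℝ] Y) : ‖adjoint T - adjoint S‖ = ‖T - S‖ := by
  rw [← map_sub (adjoint : (X →L[ℝ] Y) ≃ₗᵢ⋆[ℝ] (Y →L[ℝ] X)) T S]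
  exact (adjoint : (X →L[ℝ] Y) ≃ₗᵢ⋆[ℝ] (Y →L[ℝ] X)).norm_map _

end Aux

set_option maxHeartbeats 8000000 in
/-- Lemma 3.1, second part: with `β_k := ‖α_k (α_k I + F'(x†)*F'(x†))⁻¹ (x₀ - x†)‖` one has
`‖x_k - x†‖ ≈ β_k`, `‖x_{k-1} - x†‖ ≲ ‖x_k - x†‖` and `‖x_l - x†‖ ≲ ‖x_k - x†‖` for `k ≤ l`,
for the noise-free iterates `x_k`; the constants depend only on `r`. -/
theorem stmt8 {X Y : Type*} [NormedAddCommGroup X] [InnerProductSpace ℝ X] [CompleteSpace X]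
    [NormedAddCommGroup Y] [InnerProductSpace ℝ Y] [CompleteSpace Y]
    (r : ℝ) (hr : 1 < r) :
    ∃ ε > 0, ∃ c₁ > 0, ∃ c₂ > 0, ∃ C > 0,
      ∀ (ρ L : ℝ) (α : ℕ → ℝ) (F : X → Y) (F' : X → X →L[ℝ] Y) (xdag x₀ : X) (y : Y),
      F xdag = y →
      4 * ‖x₀ - xdag‖ < ρ →
      (∀ x ∈ Metric.closedBall xdag ρ, HasFDerivAt F (F' x) x) →
      (∀ x ∈ Metric.closedBall xdag ρ, ∀ z ∈ Metric.closedBall xdag ρ,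
        ‖F' x - F' z‖ ≤ L * ‖x - z‖) →
      (∀ x ∈ Metric.closedBall xdag ρ, ‖F' x‖ ≤ Real.sqrt (α 0)) →
      (∀ k, 0 < α k) →
      (∀ k, 1 ≤ α k / α (k + 1) ∧ α k / α (k + 1) ≤ r) →
      Tendsto α atTop (nhds 0) →
      ∀ v : Y, v ∈ (LinearMap.ker (adjoint (F' xdag) : Y →ₗ[ℝ] X))ᗮ →
      x₀ - xdag = adjoint (F' xdag) v → L * ‖v‖ ≤ ε →
      ∀ xf : ℕ → X, xf 0 = x₀ →
      (∀ k, xf (k + 1) = xf k - regInvX (α k) (F' (xf k))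
        ((adjoint (F' (xf k))) (F (xf k) - y) + α k • (xf k - x₀))) →
      (∀ k : ℕ,
          c₁ * ‖α k • regInvX (α k) (F' xdag) (x₀ - xdag)‖ ≤ ‖xf k - xdag‖ ∧
          ‖xf k - xdag‖ ≤ c₂ * ‖α k • regInvX (α k) (F' xdag) (x₀ - xdag)‖) ∧
      (∀ k : ℕ, 1 ≤ k → ‖xf (k - 1) - xdag‖ ≤ C * ‖xf k - xdag‖) ∧
      (∀ k l : ℕ, k ≤ l → ‖xf l - xdag‖ ≤ C * ‖xf k - xdag‖) := by
  have hr0 : (0:ℝ) < r := lt_trans one_pos hr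
  refine ⟨1/(40*r^2), by positivity, 1/2, by norm_num, 4*r, by positivity,
    16*r^2, by positivity, ?_⟩
  intro ρ L α F F' xdag x₀ y hFy hρ hderiv hLip hscal hαpos hαratio _hα0 v _hv hsource hεv
    xf hxf0 hxfs
  set T := F' xdag with hT
  set e₀ := x₀ - xdag with he₀
  obtain ⟨B, hB⟩ : ∃ B : ℕ → ℝ, ∀ k, B k = α k * ‖regInvX (α k) T e₀‖ :=
    ⟨_, fun _ => rfl⟩
  have hBeq : ∀ k, ‖α k • regInvX (α k) T e₀‖ = B k := fun k => by
    rw [norm_smul, Real.norm_eq_abs, abs_of_pos (hαpos k)]; exact (hB k).symm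
  have hBnn : ∀ k, 0 ≤ B k := fun k => by
    rw [hB k]; exact mul_nonneg (hαpos k).le (norm_nonneg _)
  have hρ0 : (0:ℝ) ≤ ρ := le_trans (by positivity) hρ.le
  have hxdagmem : xdag ∈ Metric.closedBall xdag ρ := Metric.mem_closedBall_self hρ0
  have hαstep : ∀ k, α (k+1) ≤ α k := fun k =>
    (one_le_div (hαpos (k+1))).mp (hαratio k).1
  have hαanti : Antitone α := antitone_nat_of_succ_le hαstep
  have hαrat : ∀ k, α k ≤ r * α (k+1) := fun k => by
    have h2 := (hαratio k).2
    rw [div_le_iff₀ (hαpos (k+1))] at h2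
    linarith [h2]
  have hβmono : ∀ k l : ℕ, k ≤ l → B l ≤ B k := fun k l h => by
    rw [hB k, hB l]; exact beta_mono (hαpos l) (hαanti h) T e₀
  have hβstep : ∀ k, B k ≤ 2*r*B (k+1) := by
    intro k
    have h1 := beta_mono' (hαpos (k+1)) (hαstep k) T e₀
    have h2 := hαrat k
    have h3 := hαpos (k+1)
    have h4 := hBnn (k+1)
    rw [hB k, hB (k+1)]
    nlinarith [mul_le_mul_of_nonneg_right h2
      (mul_nonneg (hαpos (k+1)).le (norm_nonneg (regInvX (α (k+1)) T e₀)))]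
  have hsrc : e₀ = adjoint T v := hsource
  have hβv : ∀ k, 2 * B k ≤ Real.sqrt (α k) * ‖v‖ := by
    intro k
    have h := norm_regInvX_adjoint_le (hαpos k) T v
    rw [← hsrc] at h
    have hs0 : 0 < Real.sqrt (α k) := Real.sqrt_pos.mpr (hαpos k)
    have hss : Real.sqrt (α k) * Real.sqrt (α k) = α k := Real.mul_self_sqrt (hαpos k).le
    rw [hB k]
    nlinarith [mul_le_mul_of_nonneg_left h hs0.le,
      norm_nonneg (regInvX (α k) T e₀)]
  have hβe₀ : ∀ k, B k ≤ ‖e₀‖ := fun k => by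
    rw [hB k]; exact norm_regInvX_le (hαpos k) T e₀
  have hanchor : ‖e₀‖ ≤ 2 * B 0 := by
    rw [hB 0]; exact anchor_le (hαpos 0) T (hscal xdag hxdagmem) e₀
  have step : ∀ k, ‖xf k - xdag‖ ≤ 4*r*B k → ‖xf k - xdag‖ ≤ 2*‖e₀‖ →
      ‖(xf (k+1) - xdag) - α k • regInvX (α k) T e₀‖ ≤ (1/2) * B k := by
    intro k hE1 hE2
    have ha0 : 0 < α k := hαpos k
    have hs0 : 0 < Real.sqrt (α k) := Real.sqrt_pos.mpr ha0
    have hss : Real.sqrt (α k) * Real.sqrt (α k) = α k := Real.mul_self_sqrt ha0.le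
    have hxkmem : xf k ∈ Metric.closedBall xdag ρ := by
      rw [Metric.mem_closedBall, dist_eq_norm]
      linarith
    have hTTk : ‖T - F' (xf k)‖ ≤ L * ‖xf k - xdag‖ := by
      have h := hLip xdag hxdagmem (xf k) hxkmem
      rwa [norm_sub_rev xdag (xf k)] at h
    have hLE0 : 0 ≤ L * ‖xf k - xdag‖ := le_trans (norm_nonneg _) hTTk
    -- Taylor estimate
    have hw : ‖(F (xf k) - y) - F' (xf k) (xf k - xdag)‖
        ≤ L * ‖xf k - xdag‖ * ‖xf k - xdag‖ := by
      rcases eq_or_ne (xf k) xdag with hxk | hxk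
      · simp [hxk, hFy]
      · have hL : 0 ≤ L := by
          have h0 : 0 < ‖xf k - xdag‖ := norm_pos_iff.mpr (sub_ne_zero.mpr hxk)
          nlinarith [norm_nonneg (T - F' (xf k)), hTTk]
        have hsub : segment ℝ xdag (xf k) ⊆ Metric.closedBall xdag ρ :=
          (convex_closedBall xdag ρ).segment_subset hxdagmem hxkmem
        have hbound : ∀ x ∈ segment ℝ xdag (xf k),
            ‖F' x - F' (xf k)‖ ≤ L * ‖xf k - xdag‖ := by
          intro x hx
          have h1 := hLip x (hsub hx) (xf k) hxkmem
          have h2 : ‖x - xf k‖ ≤ ‖xf k - xdag‖ := by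
            obtain ⟨s1, t1, hs1, ht1, hst1, rfl⟩ := hx
            have ht1' : t1 = 1 - s1 := by linarith
            subst ht1'
            have hvec : s1 • xdag + (1 - s1) • xf k - xf k = s1 • (xdag - xf k) := by
              rw [smul_sub, sub_smul, one_smul]; abel
            rw [hvec, norm_smul, Real.norm_eq_abs, abs_of_nonneg hs1,
              norm_sub_rev xdag (xf k)]
            nlinarith [norm_nonneg (xf k - xdag)]
          calc ‖F' x - F' (xf k)‖ ≤ L * ‖x - xf k‖ := h1
            _ ≤ L * ‖xf k - xdag‖ := mul_le_mul_of_nonneg_left h2 hL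
        have key := (convex_segment xdag (xf k)).norm_image_sub_le_of_norm_hasFDerivWithin_le
          (f := fun x => F x - F' (xf k) x) (f' := fun x => F' x - F' (xf k))
          (fun x hx => ((hderiv x (hsub hx)).sub ((F' (xf k)).hasFDerivAt)).hasFDerivWithinAt)
          hbound (left_mem_segment ℝ xdag (xf k)) (right_mem_segment ℝ xdag (xf k))
        have hvec2 : (F (xf k) - F' (xf k) (xf k)) - (F xdag - F' (xf k) xdag)
            = (F (xf k) - y) - F' (xf k) (xf k - xdag) := by
          rw [map_sub, hFy]; abel
        rw [hvec2] at key
        exact key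
    -- decomposition: x_{k+1} - x† = α R_k e₀ + R_k (T_k^* w)
    have hdecomp : xf (k+1) - xdag = α k • regInvX (α k) (F' (xf k)) e₀
        + regInvX (α k) (F' (xf k)) ((adjoint (F' (xf k)))
          ((F' (xf k)) (xf k - xdag) - (F (xf k) - y))) := by
      rw [hxfs k]
      have h1 : (adjoint (F' (xf k))) (F (xf k) - y) + α k • (xf k - x₀)
          = regS (α k) (F' (xf k)) (xf k - xdag)
            - (adjoint (F' (xf k))) ((F' (xf k)) (xf k - xdag) - (F (xf k) - y))
            - α k • e₀ := by
        simp only [regS_apply, map_sub, he₀, smul_sub]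
        abel
      rw [h1, map_sub, map_sub, regInvX_regS ha0, map_smul]
      abel
    -- resolvent comparison
    have hSSu : regS (α k) T (regInvX (α k) T e₀)
          - regS (α k) (F' (xf k)) (regInvX (α k) T e₀)
        = (adjoint (F' (xf k))) ((T - F' (xf k)) (regInvX (α k) T e₀))
          + (adjoint T - adjoint (F' (xf k))) (T (regInvX (α k) T e₀)) := by
      simp only [regS_apply, ContinuousLinearMap.sub_apply, map_sub]
      abel
    have hRkdiff : regInvX (α k) (F' (xf k)) e₀ - regInvX (α k) T e₀
        = regInvX (α k) (F' (xf k))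
            ((adjoint (F' (xf k))) ((T - F' (xf k)) (regInvX (α k) T e₀)))
          + regInvX (α k) (F' (xf k))
            ((adjoint T - adjoint (F' (xf k))) (T (regInvX (α k) T e₀))) := by
      have h4 : regInvX (α k) (F' (xf k))
            (regS (α k) T (regInvX (α k) T e₀) - regS (α k) (F' (xf k)) (regInvX (α k) T e₀))
          = regInvX (α k) (F' (xf k)) (regS (α k) T (regInvX (α k) T e₀))
            - regInvX (α k) (F' (xf k)) (regS (α k) (F' (xf k)) (regInvX (α k) T e₀)) :=
        map_sub _ _ _
      rw [← map_add, ← hSSu, h4, regS_regInvX ha0, regInvX_regS ha0]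
    have hdecomp2 : (xf (k+1) - xdag) - α k • regInvX (α k) T e₀
        = α k • regInvX (α k) (F' (xf k))
            ((adjoint (F' (xf k))) ((T - F' (xf k)) (regInvX (α k) T e₀)))
          + α k • regInvX (α k) (F' (xf k))
            ((adjoint T - adjoint (F' (xf k))) (T (regInvX (α k) T e₀)))
          + regInvX (α k) (F' (xf k)) ((adjoint (F' (xf k)))
            ((F' (xf k)) (xf k - xdag) - (F (xf k) - y))) := by
      calc (xf (k+1) - xdag) - α k • regInvX (α k) T e₀
          = α k • (regInvX (α k) (F' (xf k)) e₀ - regInvX (α k) T e₀)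
            + regInvX (α k) (F' (xf k)) ((adjoint (F' (xf k)))
              ((F' (xf k)) (xf k - xdag) - (F (xf k) - y))) := by
            rw [hdecomp, smul_sub]; abel
        _ = _ := by rw [hRkdiff, smul_add]
    -- norm bounds for the three error terms
    have hu2 : 2 * Real.sqrt (α k) * ‖regInvX (α k) T e₀‖ ≤ ‖v‖ := by
      rw [hsrc]; exact norm_regInvX_adjoint_le ha0 T v
    have hTu : ‖T (regInvX (α k) T e₀)‖ ≤ ‖v‖ := by
      rw [hsrc]; exact norm_T_regInvX_adjoint_le ha0 T v
    have hz : ‖(T - F' (xf k)) (regInvX (α k) T e₀)‖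
        ≤ (L * ‖xf k - xdag‖) * ‖regInvX (α k) T e₀‖ :=
      le_trans (le_opNorm _ _) (mul_le_mul_of_nonneg_right hTTk (norm_nonneg _))
    have hadj : ‖(adjoint T - adjoint (F' (xf k))) (T (regInvX (α k) T e₀))‖
        ≤ (L * ‖xf k - xdag‖) * ‖v‖ := by
      refine le_trans (le_opNorm _ _) ?_
      rw [norm_adjoint_sub]
      exact mul_le_mul hTTk hTu (norm_nonneg _) hLE0
    have hb1 : ‖α k • regInvX (α k) (F' (xf k))
          ((adjoint (F' (xf k))) ((T - F' (xf k)) (regInvX (α k) T e₀)))‖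
        ≤ L * ‖xf k - xdag‖ * ‖v‖ / 4 := by
      rw [norm_smul, Real.norm_eq_abs, abs_of_pos ha0]
      have h1 := norm_smul_regInvX_adjoint_le ha0 (F' (xf k))
        ((T - F' (xf k)) (regInvX (α k) T e₀))
      nlinarith [h1, mul_le_mul_of_nonneg_left hz hs0.le,
        mul_le_mul_of_nonneg_left hu2 hLE0]
    have hb2 : ‖α k • regInvX (α k) (F' (xf k))
          ((adjoint T - adjoint (F' (xf k))) (T (regInvX (α k) T e₀)))‖
        ≤ L * ‖xf k - xdag‖ * ‖v‖ := by
      rw [norm_smul, Real.norm_eq_abs, abs_of_pos ha0]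
      have h1 := norm_regInvX_le ha0 (F' (xf k))
        ((adjoint T - adjoint (F' (xf k))) (T (regInvX (α k) T e₀)))
      linarith
    have hEb : ‖xf k - xdag‖ ≤ 2*r*(Real.sqrt (α k) * ‖v‖) := by
      nlinarith [hE1, mul_le_mul_of_nonneg_left (hβv k) (by positivity : (0:ℝ) ≤ 2*r)]
    have hb3 : ‖regInvX (α k) (F' (xf k)) ((adjoint (F' (xf k)))
          ((F' (xf k)) (xf k - xdag) - (F (xf k) - y)))‖
        ≤ L * ‖xf k - xdag‖ * (r * ‖v‖) := by
      have h1 := norm_regInvX_adjoint_le ha0 (F' (xf k))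
        ((F' (xf k)) (xf k - xdag) - (F (xf k) - y))
      have h2 : ‖(F' (xf k)) (xf k - xdag) - (F (xf k) - y)‖
          ≤ L * ‖xf k - xdag‖ * ‖xf k - xdag‖ := by
        rw [norm_sub_rev]; exact hw
      have h3 : 2*Real.sqrt (α k) * ‖regInvX (α k) (F' (xf k)) ((adjoint (F' (xf k)))
            ((F' (xf k)) (xf k - xdag) - (F (xf k) - y)))‖
          ≤ 2*Real.sqrt (α k) * (L * ‖xf k - xdag‖ * (r * ‖v‖)) := by
        nlinarith [mul_le_mul_of_nonneg_left hEb hLE0, h1, h2]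
      exact le_of_mul_le_mul_left h3 (by positivity)
    -- put everything together
    have hε' : L * ‖v‖ * (40*r^2) ≤ 1 := (le_div_iff₀ (by positivity)).mp hεv
    have hW0 : 0 ≤ L * ‖xf k - xdag‖ * ‖v‖ := mul_nonneg hLE0 (norm_nonneg v)
    have hchain : 40*r^2*(L * ‖xf k - xdag‖ * ‖v‖) ≤ 4*r*B k := by
      have m1 := mul_le_mul_of_nonneg_right hε' (norm_nonneg (xf k - xdag))
      nlinarith [hE1]
    have h10 : 10*r*(L * ‖xf k - xdag‖ * ‖v‖) ≤ B k := by
      nlinarith [hchain, hr0]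
    calc ‖(xf (k+1) - xdag) - α k • regInvX (α k) T e₀‖
        = ‖α k • regInvX (α k) (F' (xf k))
              ((adjoint (F' (xf k))) ((T - F' (xf k)) (regInvX (α k) T e₀)))
            + α k • regInvX (α k) (F' (xf k))
              ((adjoint T - adjoint (F' (xf k))) (T (regInvX (α k) T e₀)))
            + regInvX (α k) (F' (xf k)) ((adjoint (F' (xf k)))
              ((F' (xf k)) (xf k - xdag) - (F (xf k) - y)))‖ := by rw [hdecomp2]
      _ ≤ ‖α k • regInvX (α k) (F' (xf k))
              ((adjoint (F' (xf k))) ((T - F' (xf k)) (regInvX (α k) T e₀)))‖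
            + ‖α k • regInvX (α k) (F' (xf k))
              ((adjoint T - adjoint (F' (xf k))) (T (regInvX (α k) T e₀)))‖
            + ‖regInvX (α k) (F' (xf k)) ((adjoint (F' (xf k)))
              ((F' (xf k)) (xf k - xdag) - (F (xf k) - y)))‖ := norm_add₃_le
      _ ≤ (1/2) * B k := by
          nlinarith [hb1, hb2, hb3, h10, hW0,
            mul_nonneg (sub_nonneg.mpr hr.le) hW0]
  have hxf0' : xf 0 - xdag = e₀ := by rw [hxf0]
  have main : ∀ k, ‖xf k - xdag‖ ≤ 4*r*B k ∧ ‖xf k - xdag‖ ≤ 2*‖e₀‖ := by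
    intro k
    induction k with
    | zero =>
      rw [hxf0']
      constructor
      · nlinarith [hBnn 0, hanchor]
      · linarith [norm_nonneg e₀]
    | succ k ih =>
      have h := step k ih.1 ih.2
      have htri : ‖xf (k+1) - xdag‖ ≤ (3/2) * B k := by
        have h2 := norm_add_le ((xf (k+1) - xdag) - α k • regInvX (α k) T e₀)
          (α k • regInvX (α k) T e₀)
        rw [sub_add_cancel, hBeq k] at h2
        linarith
      constructor
      · nlinarith [hβstep k, hBnn (k+1), hBnn k]
      · linarith [hβe₀ k, norm_nonneg e₀]
  have lower : ∀ k, (1/2) * B k ≤ ‖xf k - xdag‖ := by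
    intro k
    cases k with
    | zero => rw [hxf0']; linarith [hβe₀ 0, hBnn 0]
    | succ k =>
      have h := step k (main k).1 (main k).2
      have h1 : B k - ‖xf (k+1) - xdag‖ ≤ (1/2) * B k := by
        have h2 := norm_sub_norm_le (α k • regInvX (α k) T e₀) (xf (k+1) - xdag)
        rw [hBeq k] at h2
        rw [norm_sub_rev (α k • regInvX (α k) T e₀) (xf (k+1) - xdag)] at h2
        linarith
      linarith [hβmono k (k+1) (Nat.le_succ k)]
  refine ⟨fun k => ⟨?_, ?_⟩, ?_, ?_⟩
  · rw [hBeq k]; exact lower k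
  · rw [hBeq k]; exact (main k).1
  · intro k hk
    obtain ⟨k', rfl⟩ : ∃ k', k = k' + 1 := ⟨k - 1, (Nat.succ_pred_eq_of_pos hk).symm⟩
    simp only [Nat.add_sub_cancel]
    have h1 := (main k').1
    have h2 := hβstep k'
    have h3 := lower (k'+1)
    nlinarith [hBnn (k'+1), hBnn k', norm_nonneg (xf (k'+1) - xdag)]
  · intro k l hkl
    have h1 := (main l).1
    have h2 := hβmono k l hkl
    have h3 := lower k
    nlinarith [mul_le_mul_of_nonneg_left h2 (by positivity : (0:ℝ) ≤ 4*r),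
      mul_le_mul_of_nonneg_left h3 (by positivity : (0:ℝ) ≤ 8*r),
      mul_le_mul_of_nonneg_right (by nlinarith : 8*r ≤ 16*r^2)
        (norm_nonneg (xf k - xdag))]
end

section
/- Let X and Y be real Hilbert spaces and let S, T : X → Y be bounded linear operators with ‖S − T‖ ≤ ε. Then for every α > 0 and every v ∈ Y, ‖α[(α I + S*S)^{-1} − (α I + T*T)^{-1}] T* v‖ ≤ 2 ε ‖v‖. -/
open ContinuousLinearMap RealInnerProductSpace Filter

section aux
variable {X Y : Type*} [NormedAddCommGroup X] [InnerProductSpace ℝ X] [CompleteSpace X]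
  [NormedAddCommGroup Y] [InnerProductSpace ℝ Y] [CompleteSpace Y]

lemma regA_inner (α : ℝ) (T : X →L[ℝ] Y) (x : X) :
    ⟪(α • (1 : X →L[ℝ] X) + (adjoint T).comp T) x, x⟫ = α * ‖x‖ ^ 2 + ‖T x‖ ^ 2 := by
  simp [ContinuousLinearMap.add_apply, ContinuousLinearMap.smul_apply, inner_add_left,
    real_inner_smul_left, adjoint_inner_left, real_inner_self_eq_norm_sq]

lemma regA_isUnit {α : ℝ} (hα : 0 < α) (T : X →L[ℝ] Y) :
    IsUnit (α • (1 : X →L[ℝ] X) + (adjoint T).comp T) := by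
  set A := α • (1 : X →L[ℝ] X) + (adjoint T).comp T with hA
  have hco : IsCoercive ((innerSL ℝ).comp A) := by
    refine ⟨α, hα, fun u => ?_⟩
    have h := regA_inner α T u
    simp only [ContinuousLinearMap.comp_apply, innerSL_apply_apply, ← hA] at *
    rw [h]
    nlinarith [sq_nonneg ‖T u‖, sq_nonneg ‖u‖, norm_nonneg u]
  set e := hco.continuousLinearEquivOfBilin with he
  have heA : (e : X →L[ℝ] X) = A := by
    ext u
    refine ext_inner_right ℝ fun w => ?_
    rw [ContinuousLinearEquiv.coe_coe, he, hco.continuousLinearEquivOfBilin_apply]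
    simp [ContinuousLinearMap.comp_apply, innerSL_apply_apply]
  refine ⟨⟨A, (e.symm : X →L[ℝ] X), ?_, ?_⟩, rfl⟩
  · ext u
    simp [ContinuousLinearMap.mul_apply, ← heA]
  · ext u
    simp [ContinuousLinearMap.mul_apply, ← heA]

end aux

section aux2
variable {X Y : Type*} [NormedAddCommGroup X] [InnerProductSpace ℝ X] [CompleteSpace X]
  [NormedAddCommGroup Y] [InnerProductSpace ℝ Y] [CompleteSpace Y]

lemma regA_apply_inv {α : ℝ} (hα : 0 < α) (T : X →L[ℝ] Y) (w : X) :
    (α • (1 : X →L[ℝ] X) + (adjoint T).comp T) (regInvX α T w) = w := by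
  have h := Ring.mul_inverse_cancel _ (regA_isUnit hα T)
  have h2 := ContinuousLinearMap.ext_iff.1 h w
  rw [ContinuousLinearMap.mul_apply, ContinuousLinearMap.one_apply] at h2
  exact h2

lemma regA_inv_apply {α : ℝ} (hα : 0 < α) (T : X →L[ℝ] Y) (x : X) :
    regInvX α T ((α • (1 : X →L[ℝ] X) + (adjoint T).comp T) x) = x := by
  have h := Ring.inverse_mul_cancel _ (regA_isUnit hα T)
  have h2 := ContinuousLinearMap.ext_iff.1 h x
  rw [ContinuousLinearMap.mul_apply, ContinuousLinearMap.one_apply] at h2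
  exact h2

lemma bound_a {α : ℝ} (hα : 0 < α) (T : X →L[ℝ] Y) (w : X) :
    α * ‖regInvX α T w‖ ≤ ‖w‖ := by
  set x := regInvX α T w with hx
  have key : α * ‖x‖ ^ 2 + ‖T x‖ ^ 2 = ⟪w, x⟫ := by
    rw [← regA_inner α T x, regA_apply_inv hα T w]
  have h1 : ⟪w, x⟫ ≤ ‖w‖ * ‖x‖ := real_inner_le_norm w x
  rcases (norm_nonneg x).eq_or_lt with h0 | h0
  · rw [← h0, mul_zero]; exact norm_nonneg w
  · refine le_of_mul_le_mul_right ?_ h0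
    nlinarith [sq_nonneg ‖T x‖]

lemma bound_b {α : ℝ} (hα : 0 < α) (T : X →L[ℝ] Y) (v : Y) :
    ‖T (regInvX α T (adjoint T v))‖ ≤ ‖v‖ ∧
      Real.sqrt α * ‖regInvX α T (adjoint T v)‖ ≤ ‖v‖ := by
  set x := regInvX α T (adjoint T v) with hx
  have key : α * ‖x‖ ^ 2 + ‖T x‖ ^ 2 = ⟪v, T x⟫ := by
    rw [← regA_inner α T x, regA_apply_inv hα T, adjoint_inner_left]
  have h1 : ⟪v, T x⟫ ≤ ‖v‖ * ‖T x‖ := real_inner_le_norm _ _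
  have hTx : ‖T x‖ ≤ ‖v‖ := by
    nlinarith [norm_nonneg (T x), norm_nonneg v, mul_nonneg hα.le (sq_nonneg ‖x‖)]
  refine ⟨hTx, ?_⟩
  have h2 : (Real.sqrt α * ‖x‖) ^ 2 ≤ ‖v‖ ^ 2 := by
    rw [mul_pow, Real.sq_sqrt hα.le]
    nlinarith [norm_nonneg (T x), norm_nonneg v, sq_nonneg ‖T x‖]
  have h3 := Real.sqrt_le_sqrt h2
  rwa [Real.sqrt_sq (by positivity), Real.sqrt_sq (norm_nonneg v)] at h3

end aux2

/-- If `‖S - T‖ ≤ ε` then `‖α[(α I + S*S)⁻¹ - (α I + T*T)⁻¹] T* v‖ ≤ 2 ε ‖v‖`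
for every `α > 0` and `v ∈ Y` (cf. the estimate (2.7)). -/
theorem stmt13 {X Y : Type*} [NormedAddCommGroup X] [InnerProductSpace ℝ X] [CompleteSpace X]
    [NormedAddCommGroup Y] [InnerProductSpace ℝ Y] [CompleteSpace Y]
    (S T : X →L[ℝ] Y) (ε : ℝ) (hST : ‖S - T‖ ≤ ε) :
    ∀ α : ℝ, 0 < α → ∀ v : Y,
      ‖α • (regInvX α S ((adjoint T) v) - regInvX α T ((adjoint T) v))‖ ≤ 2 * ε * ‖v‖ := by
  intro α hα v
  have hε : 0 ≤ ε := le_trans (norm_nonneg _) hST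
  have hTS : ‖T - S‖ ≤ ε := by rwa [← norm_sub_rev]
  set x := regInvX α T (adjoint T v) with hx
  set a := regInvX α S (adjoint T v) with ha
  have hBx : (α • (1 : X →L[ℝ] X) + (adjoint T).comp T) x = adjoint T v := regA_apply_inv hα T _
  have hAa : (α • (1 : X →L[ℝ] X) + (adjoint S).comp S) a = adjoint T v := regA_apply_inv hα S _
  set y1 := (adjoint T - adjoint S) (T x) with hy1
  set y2 := (T - S) x with hy2
  have hid : a - x = regInvX α S y1 + regInvX α S (adjoint S y2) := by
    have h1 : (α • (1 : X →L[ℝ] X) + (adjoint S).comp S) (a - x) = y1 + adjoint S y2 := by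
      rw [map_sub, hAa, ← hBx]
      simp only [ContinuousLinearMap.add_apply, ContinuousLinearMap.smul_apply,
        ContinuousLinearMap.one_apply, ContinuousLinearMap.comp_apply,
        ContinuousLinearMap.sub_apply, hy1, hy2, map_sub]
      abel
    calc a - x = regInvX α S ((α • (1 : X →L[ℝ] X) + (adjoint S).comp S) (a - x)) :=
          (regA_inv_apply hα S _).symm
      _ = _ := by rw [h1, map_add]
  -- bounds for T-side
  obtain ⟨hTxv, hsx⟩ := bound_b hα T v
  -- norm of adjoint difference
  have hadj : ‖adjoint T - adjoint S‖ ≤ ε := by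
    have : adjoint T - adjoint S = adjoint (T - S) := (map_sub (adjoint (𝕜 := ℝ)) T S).symm
    rw [this, LinearIsometryEquiv.norm_map]
    exact hTS
  have hy1n : ‖y1‖ ≤ ε * ‖v‖ := by
    calc ‖y1‖ ≤ ‖adjoint T - adjoint S‖ * ‖T x‖ := le_opNorm _ _
      _ ≤ ε * ‖v‖ := mul_le_mul hadj hTxv (norm_nonneg _) hε
  have hy2n : ‖y2‖ ≤ ε * ‖x‖ := by
    calc ‖y2‖ ≤ ‖T - S‖ * ‖x‖ := le_opNorm _ _
      _ ≤ ε * ‖x‖ := mul_le_mul_of_nonneg_right hTS (norm_nonneg _)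
  -- term 1
  have t1 : α * ‖regInvX α S y1‖ ≤ ε * ‖v‖ := (bound_a hα S y1).trans hy1n
  -- term 2
  have hsqrt : (0:ℝ) < Real.sqrt α := Real.sqrt_pos.2 hα
  have t2 : α * ‖regInvX α S (adjoint S y2)‖ ≤ ε * ‖v‖ := by
    have hb := (bound_b hα S y2).2
    have h4 : α * ‖regInvX α S (adjoint S y2)‖
        = Real.sqrt α * (Real.sqrt α * ‖regInvX α S (adjoint S y2)‖) := by
      rw [← mul_assoc, Real.mul_self_sqrt hα.le]
    rw [h4]
    calc Real.sqrt α * (Real.sqrt α * ‖regInvX α S (adjoint S y2)‖)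
        ≤ Real.sqrt α * ‖y2‖ := by
          exact mul_le_mul_of_nonneg_left hb hsqrt.le
      _ ≤ Real.sqrt α * (ε * ‖x‖) := mul_le_mul_of_nonneg_left hy2n hsqrt.le
      _ = ε * (Real.sqrt α * ‖x‖) := by ring
      _ ≤ ε * ‖v‖ := mul_le_mul_of_nonneg_left hsx hε
  calc ‖α • (a - x)‖ = ‖α • regInvX α S y1 + α • regInvX α S (adjoint S y2)‖ := by
        rw [hid, smul_add]
    _ ≤ ‖α • regInvX α S y1‖ + ‖α • regInvX α S (adjoint S y2)‖ := norm_add_le _ _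
    _ = α * ‖regInvX α S y1‖ + α * ‖regInvX α S (adjoint S y2)‖ := by
        rw [norm_smul, norm_smul, Real.norm_eq_abs, abs_of_pos hα]
    _ ≤ ε * ‖v‖ + ε * ‖v‖ := add_le_add t1 t2
    _ = 2 * ε * ‖v‖ := by ring
end
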